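/- Let C be a unary covering of a finite nonempty set U. Then for every x ∈ U, the neighborhood N(x) equals ⋂ Md(x), the intersection of the minimal description of x; in particular N(x) ∈ C. -/

import Mathlib

open Set

/-- A covering of a finite nonempty universe `α`: a family of nonempty subsets whose union is everything. -/
def IsCovering {α : Type*} (C : Set (Set α)) : Prop :=
  (∀ K ∈ C, K.Nonempty) ∧ ⋃₀ C = Set.univ

/-- The second type of covering lower approximation. -/
def SL {α : Type*} (C : Set (Set α)) (X : Set α) : Set α :=
  ⋃₀ {K | K ∈ C ∧ K ⊆ X}

/-- The second type of covering upper approximation. -/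
def SH {α : Type*} (C : Set (Set α)) (X : Set α) : Set α :=
  ⋃₀ {K | K ∈ C ∧ (K ∩ X).Nonempty}

/-- The minimal description of a point. -/
def Md {α : Type*} (C : Set (Set α)) (x : α) : Set (Set α) :=
  {K | K ∈ C ∧ x ∈ K ∧ ∀ S ∈ C, x ∈ S → S ⊆ K → S = K}

/-- A covering is unary if every point has exactly one element in its minimal description. -/
def Unary {α : Type*} (C : Set (Set α)) : Prop :=
  ∀ x : α, ∃! K, K ∈ Md C x

/-- The neighborhood of a point. -/
def Nbhd {α : Type*} (C : Set (Set α)) (x : α) : Set α :=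
  ⋂₀ {K | K ∈ C ∧ x ∈ K}

/-- The indiscernible neighborhood of a point. -/
def IndNbhd {α : Type*} (C : Set (Set α)) (x : α) : Set α :=
  ⋃₀ {K | K ∈ C ∧ x ∈ K}

/-- A member of the covering is reducible if it is a union of other members. -/
def Reducible {α : Type*} (C : Set (Set α)) (K : Set α) : Prop :=
  ∃ D ⊆ C \ {K}, K = ⋃₀ D

/-- The reduct of a covering: its irreducible members. -/
def reduct {α : Type*} (C : Set (Set α)) : Set (Set α) :=
  {K | K ∈ C ∧ ¬ Reducible C K}

/-- The closure operator induced by the fixed point family of `SL`. -/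
def clC {α : Type*} (C : Set (Set α)) (X : Set α) : Set α :=
  ⋂₀ {S | SL C S = S ∧ X ⊆ S}

theorem stmt_19 {α : Type*} [Fintype α] [Nonempty α] (C : Set (Set α))
    (hC : IsCovering C) (hU : Unary C) (x : α) :
    Nbhd C x = ⋂₀ Md C x ∧ Nbhd C x ∈ C := by
  obtain ⟨K₀, hK₀, huniq⟩ := hU x
  -- every S ∈ C containing x has a minimal element of Md below it
  have key : ∀ S ∈ C, x ∈ S → K₀ ⊆ S := by
    intro S hS hxS
    obtain ⟨K, ⟨⟨hKC, hxK⟩, hKS⟩, hmin⟩ :=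
      Set.Finite.exists_minimal (s := {K | (K ∈ C ∧ x ∈ K) ∧ K ⊆ S})
        (Set.toFinite _) ⟨S, ⟨hS, hxS⟩, subset_rfl⟩
    have hKMd : K ∈ Md C x := by
      refine ⟨hKC, hxK, fun T hT hxT hTK => ?_⟩
      exact hTK.antisymm (hmin ⟨⟨hT, hxT⟩, hTK.trans hKS⟩ hTK)
    have := huniq K hKMd
    rw [this] at hKS
    exact hKS
  have hMd : Md C x = {K₀} := Set.eq_singleton_iff_unique_mem.mpr ⟨hK₀, huniq⟩
  have hN : Nbhd C x = K₀ := by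
    apply Set.Subset.antisymm
    · exact Set.sInter_subset_of_mem ⟨hK₀.1, hK₀.2.1⟩
    · exact Set.subset_sInter fun S ⟨hS, hxS⟩ => key S hS hxS
  rw [hN, hMd, Set.sInter_singleton]
  exact ⟨rfl, hK₀.1⟩
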